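/- The Gelfand-Zeitlin torus action is well defined: let A be an n×n Hermitian matrix whose k-th principal submatrix A^{(k)} has distinct eigenvalues, let t ∈ T(k) be a diagonal unitary k×k matrix, and let U, U' ∈ U(k) be unitary matrices such that both U A^{(k)} U⁻¹ and U' A^{(k)} U'⁻¹ equal the same diagonal matrix with entries the ordered eigenvalues of A^{(k)}. Then U⁻¹ t U = U'⁻¹ t U', so the element t • A := (U⁻¹ t U) A (U⁻¹ t U)⁻¹ is independent of the choice of U. -/

import Mathlib

open Matrix

/-- The `k`-th principal (upper-left `k × k`) submatrix of an `n × n` matrix. -/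
def principalSubmatrix {n : ℕ} (k : ℕ) (hk : k ≤ n) (A : Matrix (Fin n) (Fin n) ℂ) :
    Matrix (Fin k) (Fin k) ℂ :=
  A.submatrix (Fin.castLE hk) (Fin.castLE hk)

/-- The embedding of a `k × k` matrix into `n × n` matrices as the upper-left block,
extended by the identity (the embedding `U(k) ⊂ U(n)`). -/
def embedBlock {n : ℕ} (k : ℕ) (hk : k ≤ n) (M : Matrix (Fin k) (Fin k) ℂ) :
    Matrix (Fin n) (Fin n) ℂ := fun i j =>
  if hi : (i : ℕ) < k then
    if hj : (j : ℕ) < k then M ⟨i, hi⟩ ⟨j, hj⟩ else 0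
  else if i = j then 1 else 0

/-- **Well-definedness of the Gelfand-Zeitlin torus action**: if `A` is Hermitian with
`A^{(k)}` having distinct eigenvalues, `t ∈ T(k)` is a diagonal unitary, and `U, U'` are
unitaries conjugating `A^{(k)}` to the same diagonal matrix of ordered eigenvalues, then
`U⁻¹ t U = U'⁻¹ t U'`; hence `t • A := (U⁻¹tU) A (U⁻¹tU)⁻¹` does not depend on `U`. -/
theorem gz_torus_action_well_defined (n k : ℕ) (hk : k ≤ n)
    (A : Matrix (Fin n) (Fin n) ℂ) (hA : A.IsHermitian)
    (d : Fin k → ℝ) (hd : StrictMono d)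
    (s : Fin k → ℂ) (hs : ∀ i, star (s i) * s i = 1)
    (U U' : Matrix (Fin k) (Fin k) ℂ)
    (hU : U ∈ Matrix.unitaryGroup (Fin k) ℂ) (hU' : U' ∈ Matrix.unitaryGroup (Fin k) ℂ)
    (hdiag : U * principalSubmatrix k hk A * Uᴴ = Matrix.diagonal fun i => (d i : ℂ))
    (hdiag' : U' * principalSubmatrix k hk A * U'ᴴ = Matrix.diagonal fun i => (d i : ℂ)) :
    Uᴴ * Matrix.diagonal s * U = U'ᴴ * Matrix.diagonal s * U' ∧
      embedBlock k hk (Uᴴ * Matrix.diagonal s * U) * A *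
          (embedBlock k hk (Uᴴ * Matrix.diagonal s * U))ᴴ =
        embedBlock k hk (U'ᴴ * Matrix.diagonal s * U') * A *
          (embedBlock k hk (U'ᴴ * Matrix.diagonal s * U'))ᴴ := by
  have hUs : Uᴴ * U = 1 := by simpa [Matrix.star_eq_conjTranspose] using hU.1
  have hUs' : U * Uᴴ = 1 := by simpa [Matrix.star_eq_conjTranspose] using hU.2
  have hU's : U'ᴴ * U' = 1 := by simpa [Matrix.star_eq_conjTranspose] using hU'.1
  have hU's' : U' * U'ᴴ = 1 := by simpa [Matrix.star_eq_conjTranspose] using hU'.2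
  set V : Matrix (Fin k) (Fin k) ℂ := U' * Uᴴ with hV
  have hVsV : Vᴴ * V = 1 := by
    simp only [hV, conjTranspose_mul, conjTranspose_conjTranspose]
    calc U * U'ᴴ * (U' * Uᴴ) = U * (U'ᴴ * U') * Uᴴ := by noncomm_ring
    _ = 1 := by rw [hU's]; simpa using hUs'
  -- A^(k) = Uᴴ D U
  have hAk : principalSubmatrix k hk A = Uᴴ * Matrix.diagonal (fun i => (d i : ℂ)) * U := by
    calc principalSubmatrix k hk A
        = (Uᴴ * U) * principalSubmatrix k hk A * (Uᴴ * U) := by rw [hUs]; simp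
      _ = Uᴴ * (U * principalSubmatrix k hk A * Uᴴ) * U := by noncomm_ring
      _ = Uᴴ * Matrix.diagonal (fun i => (d i : ℂ)) * U := by rw [hdiag]
  have hVD : V * Matrix.diagonal (fun i => (d i : ℂ)) * Vᴴ
      = Matrix.diagonal (fun i => (d i : ℂ)) := by
    have : U' * (Uᴴ * Matrix.diagonal (fun i => (d i : ℂ)) * U) * U'ᴴ
        = Matrix.diagonal (fun i => (d i : ℂ)) := by rw [← hAk]; exact hdiag'
    calc V * Matrix.diagonal (fun i => (d i : ℂ)) * Vᴴ
        = U' * (Uᴴ * Matrix.diagonal (fun i => (d i : ℂ)) * U) * U'ᴴ := by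
          simp only [hV, conjTranspose_mul, conjTranspose_conjTranspose]; noncomm_ring
      _ = _ := this
  have hcomm : V * Matrix.diagonal (fun i => (d i : ℂ)) = Matrix.diagonal (fun i => (d i : ℂ)) * V := by
    have := congrArg (fun M => M * V) hVD
    calc V * Matrix.diagonal (fun i => (d i : ℂ))
        = V * Matrix.diagonal (fun i => (d i : ℂ)) * (Vᴴ * V) := by rw [hVsV]; simp [Matrix.mul_assoc]
      _ = V * Matrix.diagonal (fun i => (d i : ℂ)) * Vᴴ * V := by noncomm_ring
      _ = _ := this
  have hVoff : ∀ i j : Fin k, i ≠ j → V i j = 0 := by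
    intro i j hij
    have h1 := congrFun (congrFun hcomm i) j
    simp only [Matrix.mul_diagonal, Matrix.diagonal_mul] at h1
    have hdne : (d i : ℂ) ≠ (d j : ℂ) := by
      simp only [ne_eq, Complex.ofReal_inj]
      exact fun h => hij (hd.injective h)
    have : V i j * ((d j : ℂ) - (d i : ℂ)) = 0 := by ring_nf; linear_combination h1
    rcases mul_eq_zero.mp this with h | h
    · exact h
    · exact absurd ((sub_eq_zero.mp h).symm) hdne
  have hcommS : V * Matrix.diagonal s = Matrix.diagonal s * V := by
    ext i j
    simp only [Matrix.mul_diagonal, Matrix.diagonal_mul]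
    by_cases hij : i = j
    · subst hij; ring
    · rw [hVoff i j hij]; ring
  have hconj : Vᴴ * Matrix.diagonal s * V = Matrix.diagonal s := by
    rw [Matrix.mul_assoc, ← hcommS, ← Matrix.mul_assoc, hVsV, Matrix.one_mul]
  have key : Uᴴ * Matrix.diagonal s * U = U'ᴴ * Matrix.diagonal s * U' := by
    have hU'eq : U' = V * U := by
      rw [hV, Matrix.mul_assoc, hUs, Matrix.mul_one]
    rw [hU'eq]
    simp only [conjTranspose_mul]
    calc Uᴴ * Matrix.diagonal s * U = Uᴴ * (Vᴴ * Matrix.diagonal s * V) * U := by rw [hconj]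
      _ = Uᴴ * Vᴴ * (Matrix.diagonal s * (V * U)) := by noncomm_ring
      _ = Uᴴ * Vᴴ * Matrix.diagonal s * (V * U) := by noncomm_ring
  exact ⟨key, by rw [key]⟩
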